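/- Let (A,ρ) be a C*-probability space with A ≠ ℂ. If (B,τ) is selfless and θ : (A,ρ) → (B,τ) is an existential embedding, then ρ induces a faithful GNS representation; explicitly, for every nonzero positive a ∈ A there exists x ∈ A with ρ(x a x*) > 0. -/

import Mathlib

open scoped ComplexOrder

/-- Evaluation of a *-monomial (a word in variables and their adjoints). -/
def evalWord {A : Type*} [Monoid A] [Star A] {σ : Type*} (a : σ → A)
    (w : List (σ × Bool)) : A :=
  (w.map fun p => if p.2 then star (a p.1) else a p.1).prod

/-- A noncommutative *-polynomial: a finitely supported ℂ-linear combination of words. -/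
abbrev StarPoly (σ : Type*) := (List (σ × Bool)) →₀ ℂ

noncomputable def StarPoly.eval {A : Type*} [Ring A] [StarRing A] [Algebra ℂ A]
    {σ : Type*} (a : σ → A) (p : StarPoly σ) : A :=
  p.sum fun w c => c • evalWord a w

/-- A quantifier-free formula in the language of C*-probability spaces, with m parameter
variables and n quantified variables: a continuous function applied to finitely many
expressions of the form ‖p(x̄,ȳ)‖ and ρ(q(x̄,ȳ)). -/
structure QFFormula (m n : ℕ) where
  k : ℕ
  l : ℕ
  normPolys : Fin k → StarPoly (Fin m ⊕ Fin n)
  statePolys : Fin l → StarPoly (Fin m ⊕ Fin n)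
  f : (Fin k → ℝ) → (Fin l → ℂ) → ℝ
  continuous_f : Continuous fun p : (Fin k → ℝ) × (Fin l → ℂ) => f p.1 p.2

noncomputable def QFFormula.eval {m n : ℕ} (Φ : QFFormula m n) {A : Type*}
    [NormedRing A] [StarRing A] [NormedAlgebra ℂ A] (ρ : A →ₗ[ℂ] ℂ)
    (x : Fin m → A) (y : Fin n → A) : ℝ :=
  Φ.f (fun i => ‖(Φ.normPolys i).eval (Sum.elim x y)‖)
      (fun j => ρ ((Φ.statePolys j).eval (Sum.elim x y)))

/-- A state on a unital C*-algebra. -/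
def IsState {A : Type*} [NormedRing A] [StarRing A] [NormedAlgebra ℂ A]
    (ρ : A →ₗ[ℂ] ℂ) : Prop :=
  ρ 1 = 1 ∧ ∀ a : A, 0 ≤ ρ (star a * a)

/-- An existential map of C*-probability spaces. -/
def IsExistential {A B : Type*}
    [NormedRing A] [StarRing A] [NormedAlgebra ℂ A]
    [NormedRing B] [StarRing B] [NormedAlgebra ℂ B]
    (ρ : A →ₗ[ℂ] ℂ) (τ : B →ₗ[ℂ] ℂ) (θ : A →⋆ₐ[ℂ] B) : Prop :=
  ∀ (m n : ℕ) (Φ : QFFormula m n) (a : Fin m → A), (∀ i, ‖a i‖ ≤ 1) →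
    sInf {r : ℝ | ∃ y : Fin n → A, (∀ j, ‖y j‖ ≤ 1) ∧ Φ.eval ρ a y = r} =
    sInf {r : ℝ | ∃ y : Fin n → B, (∀ j, ‖y j‖ ≤ 1) ∧ Φ.eval τ (fun i => θ (a i)) y = r}

/-- Free independence of two subsets of a C*-probability space. -/
def FreelyIndependent {A : Type*} [NormedRing A] [StarRing A] [NormedAlgebra ℂ A]
    (ρ : A →ₗ[ℂ] ℂ) (B C : Set A) : Prop :=
  ∀ (k : ℕ) (a : Fin k → A) (s : Fin k → Bool),
    (∀ j, a j ∈ (bif s j then B else C)) →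
    (∀ j, ρ (a j) = 0) →
    (∀ (j : ℕ) (h : j + 1 < k), s ⟨j, Nat.lt_of_succ_lt h⟩ ≠ s ⟨j + 1, h⟩) →
    0 < k → ρ (List.ofFn a).prod = 0

/-- The GNS representation induced by `ρ` is faithful. -/
def FaithfulGNS {A : Type*} [NormedRing A] [StarRing A] [NormedAlgebra ℂ A]
    (ρ : A →ₗ[ℂ] ℂ) : Prop :=
  ∀ a : A, (∀ x : A, ρ (star (a * x) * (a * x)) = 0) → a = 0

/-- `(F, φ)`, together with the embeddings `ι₁, ι₂`, is a realization of the reduced free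
product `(A,ρ) * (B,τ)`: the embeddings are state-preserving, their images are freely
independent and generate `F` as a C*-algebra, and `φ` has faithful GNS representation.
(These properties characterize the reduced free product uniquely.) -/
structure IsReducedFreeProduct {A B F : Type*}
    [NormedRing A] [StarRing A] [NormedAlgebra ℂ A]
    [NormedRing B] [StarRing B] [NormedAlgebra ℂ B]
    [NormedRing F] [StarRing F] [CStarRing F] [NormedAlgebra ℂ F] [StarModule ℂ F]
    (ρ : A →ₗ[ℂ] ℂ) (τ : B →ₗ[ℂ] ℂ) (φ : F →ₗ[ℂ] ℂ)
    (ι₁ : A →⋆ₐ[ℂ] F) (ι₂ : B →⋆ₐ[ℂ] F) : Prop where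
  injective₁ : Function.Injective ι₁
  injective₂ : Function.Injective ι₂
  isState : IsState φ
  state₁ : ∀ a, φ (ι₁ a) = ρ a
  state₂ : ∀ b, φ (ι₂ b) = τ b
  free : FreelyIndependent φ (Set.range ι₁) (Set.range ι₂)
  generates :
    (StarAlgebra.adjoin ℂ (Set.range ι₁ ∪ Set.range ι₂)).topologicalClosure = ⊤
  gnsFaithful : FaithfulGNS φ

/-- A C*-probability space `(A,ρ)` is selfless: `A ≠ ℂ`, `ρ` has faithful GNS
representation, and the first factor embedding `(A,ρ) → (A,ρ) * (A,ρ)` into (any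
C*-realization of) the reduced free product is existential. -/
def Selfless {A : Type u}
    [NormedRing A] [StarRing A] [CStarRing A] [NormedAlgebra ℂ A] [StarModule ℂ A]
    (ρ : A →ₗ[ℂ] ℂ) : Prop :=
  (∃ a : A, ∀ c : ℂ, a ≠ algebraMap ℂ A c) ∧ FaithfulGNS ρ ∧
  ∀ (F : Type u) [CStarAlgebra F], ∀ (φ : F →ₗ[ℂ] ℂ) (ι₁ ι₂ : A →⋆ₐ[ℂ] F),
    IsReducedFreeProduct ρ ρ φ ι₁ ι₂ → IsExistential ρ φ ι₁

/-- The word `y * x * star y`. -/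
def myWord : List ((Fin 1 ⊕ Fin 1) × Bool) :=
  [(Sum.inr 0, false), (Sum.inl 0, false), (Sum.inr 0, true)]

/-- The formula `max (-(ρ (y * a * star y)).re) (-1)`. -/
noncomputable def myΦ : QFFormula 1 1 where
  k := 0
  l := 1
  normPolys := Fin.elim0
  statePolys := fun _ => Finsupp.single myWord 1
  f := fun _ q => max (-(q 0).re) (-1)
  continuous_f := by
    exact ((Complex.continuous_re.comp
      ((continuous_apply (0 : Fin 1)).comp continuous_snd)).neg).max continuous_const

lemma myΦ_eval {C : Type*} [NormedRing C] [StarRing C] [NormedAlgebra ℂ C]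
    (ρ : C →ₗ[ℂ] ℂ) (x y : Fin 1 → C) :
    myΦ.eval ρ x y = max (-(ρ (y 0 * (x 0 * star (y 0)))).re) (-1) := by
  simp [QFFormula.eval, myΦ, StarPoly.eval, Finsupp.sum_single_index, evalWord, myWord]

/-- If `A ≠ ℂ`, `(B,τ)` is selfless and `θ : (A,ρ) → (B,τ)` is an existential embedding,
then `ρ` induces a faithful GNS representation: for every nonzero positive `a ∈ A` there
exists `x ∈ A` with `ρ(x a x*) > 0`. -/
theorem stmt14 {A B : Type u} [CStarAlgebra A] [PartialOrder A] [StarOrderedRing A]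
    [CStarAlgebra B]
    (ρ : A →ₗ[ℂ] ℂ) (τ : B →ₗ[ℂ] ℂ) (hρ : IsState ρ) (hτ : IsState τ)
    (hA : ∃ a : A, ∀ c : ℂ, a ≠ algebraMap ℂ A c)
    (hself : Selfless τ)
    (θ : A →⋆ₐ[ℂ] B) (hθinj : Function.Injective θ) (hθst : ∀ a, τ (θ a) = ρ a)
    (hθex : IsExistential ρ τ θ) :
    ∀ a : A, 0 ≤ a → a ≠ 0 → ∃ x : A, 0 < ρ (x * a * star x) := by
  intro a ha hane
  obtain ⟨-, hτGNS, -⟩ := hself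
  -- square root of `a`
  set c : A := CFC.sqrt a with hc
  have hcnn : 0 ≤ c := CFC.sqrt_nonneg a
  have hcsa : star c = c := (IsSelfAdjoint.of_nonneg hcnn).star_eq
  have hcc : c * c = a := CFC.sqrt_mul_sqrt_self a ha
  have hcne : c ≠ 0 := by
    intro h; apply hane; rw [← hcc, h, mul_zero]
  have hθcne : θ c ≠ 0 := fun h => hcne (hθinj (by simpa using h))
  -- use faithfulness of τ's GNS representation
  have : ¬ ∀ x : B, τ (star (θ c * x) * (θ c * x)) = 0 := fun h => hθcne (hτGNS _ h)
  push_neg at this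
  obtain ⟨x0, hx0⟩ := this
  have hkey : star (θ c * x0) * (θ c * x0) = star x0 * (θ a * x0) := by
    rw [star_mul, ← map_star, hcsa]
    rw [← hcc, map_mul]
    simp [mul_assoc]
  have ht0 : (0 : ℂ) ≤ τ (star x0 * (θ a * x0)) := by rw [← hkey]; exact hτ.2 _
  have htne : τ (star x0 * (θ a * x0)) ≠ 0 := by rw [← hkey]; exact hx0
  have htpos : (0 : ℂ) < τ (star x0 * (θ a * x0)) := lt_of_le_of_ne ht0 (Ne.symm htne)
  have hx0ne : x0 ≠ 0 := by
    intro h; apply htne; simp [h]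
  -- normalizations
  have hanorm : (0 : ℝ) < ‖a‖ := norm_pos_iff.mpr hane
  have hx0norm : (0 : ℝ) < ‖x0‖ := norm_pos_iff.mpr hx0ne
  set a' : A := ((‖a‖⁻¹ : ℝ) : ℂ) • a with ha'
  have ha'norm : ∀ i : Fin 1, ‖(fun _ : Fin 1 => a') i‖ ≤ 1 := by
    intro i
    simp only [ha', norm_smul, Complex.norm_real, Real.norm_eq_abs,
      abs_of_pos (inv_pos.mpr hanorm)]
    rw [inv_mul_cancel₀ hanorm.ne']
  set y' : B := ((‖x0‖⁻¹ : ℝ) : ℂ) • star x0 with hy'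
  have hy'norm : ‖y'‖ ≤ 1 := by
    simp only [hy', norm_smul, Complex.norm_real, Real.norm_eq_abs,
      abs_of_pos (inv_pos.mpr hx0norm), norm_star]
    rw [inv_mul_cancel₀ hx0norm.ne']
  -- value of the formula at `y'` on the `B` side
  have hval : y' * (θ a' * star y') =
      (((‖x0‖⁻¹ : ℝ) : ℂ) * ((‖x0‖⁻¹ : ℝ) : ℂ) * ((‖a‖⁻¹ : ℝ) : ℂ)) •
        (star x0 * (θ a * x0)) := by
    simp only [hy', ha', map_smul, star_smul, star_star, Complex.star_def,
      Complex.conj_ofReal, smul_mul_assoc, mul_smul_comm]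
    module
  set t : ℂ := τ (star x0 * (θ a * x0)) with htdef
  have hrpos : (0 : ℝ) < ‖x0‖⁻¹ * ‖x0‖⁻¹ * ‖a‖⁻¹ := by positivity
  have hvre : (0 : ℝ) < (τ (y' * (θ a' * star y'))).re := by
    rw [hval, map_smul]
    have h1 : (((‖x0‖⁻¹ : ℝ) : ℂ) * ((‖x0‖⁻¹ : ℝ) : ℂ) * ((‖a‖⁻¹ : ℝ) : ℂ)) =
        ((‖x0‖⁻¹ * ‖x0‖⁻¹ * ‖a‖⁻¹ : ℝ) : ℂ) := by push_cast; ring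
    rw [h1]
    have htre : 0 < t.re := (Complex.lt_def.mp htpos).1
    have htim : t.im = 0 := ((Complex.lt_def.mp htpos).2).symm
    simp only [smul_eq_mul, Complex.mul_re, Complex.ofReal_re, Complex.ofReal_im,
      zero_mul, sub_zero, ← htdef, htim, mul_zero]
    exact mul_pos hrpos htre
  -- the `B`-side set contains a negative value
  set SB : Set ℝ := {r : ℝ | ∃ y : Fin 1 → B, (∀ j, ‖y j‖ ≤ 1) ∧
    myΦ.eval τ (fun i => θ ((fun _ : Fin 1 => a') i)) y = r} with hSB
  set SA : Set ℝ := {r : ℝ | ∃ y : Fin 1 → A, (∀ j, ‖y j‖ ≤ 1) ∧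
    myΦ.eval ρ (fun _ : Fin 1 => a') y = r} with hSA
  have hmem : max (-(τ (y' * (θ a' * star y'))).re) (-1) ∈ SB := by
    refine ⟨fun _ => y', fun j => hy'norm, ?_⟩
    rw [myΦ_eval]
  have hBneg : max (-(τ (y' * (θ a' * star y'))).re) (-1) < 0 := by
    apply max_lt (by linarith) (by norm_num)
  have hBbdd : BddBelow SB := by
    refine ⟨-1, fun r hr => ?_⟩
    obtain ⟨y, -, hy⟩ := hr
    rw [myΦ_eval] at hy
    rw [← hy]
    exact le_max_right _ _
  have hinfeq : sInf SA = sInf SB := hθex 1 1 myΦ (fun _ => a') ha'norm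
  have hinfAneg : sInf SA < 0 :=
    lt_of_le_of_lt (hinfeq ▸ csInf_le hBbdd hmem) hBneg
  have hSAne : SA.Nonempty := by
    refine ⟨myΦ.eval ρ (fun _ : Fin 1 => a') (fun _ => 0), fun _ => 0, fun j => by simp, rfl⟩
  obtain ⟨r, hrSA, hrneg⟩ := exists_lt_of_csInf_lt hSAne hinfAneg
  obtain ⟨y, -, hyr⟩ := hrSA
  rw [myΦ_eval] at hyr
  set x : A := y 0 with hx
  have hre : 0 < (ρ (x * (a' * star x))).re := by
    by_contra h
    push_neg at h
    have : (0 : ℝ) ≤ -(ρ (x * (a' * star x))).re := by linarith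
    have : (0 : ℝ) ≤ r := le_trans this (hyr ▸ le_max_left _ _)
    linarith
  refine ⟨x, ?_⟩
  -- positivity of `ρ (x * a * star x)`
  have hxa : x * a * star x = star (c * star x) * (c * star x) := by
    rw [star_mul, star_star, hcsa, ← hcc]
    simp [mul_assoc]
  have hnn : (0 : ℂ) ≤ ρ (x * a * star x) := by rw [hxa]; exact hρ.2 _
  have hre' : 0 < (ρ (x * a * star x)).re := by
    have h2 : x * (a' * star x) = ((‖a‖⁻¹ : ℝ) : ℂ) • (x * a * star x) := by
      simp only [ha', smul_mul_assoc, mul_smul_comm, mul_assoc]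
    rw [h2, map_smul] at hre
    simp only [smul_eq_mul, Complex.mul_re, Complex.ofReal_re, Complex.ofReal_im,
      zero_mul, sub_zero] at hre
    nlinarith [inv_pos.mpr hanorm, (Complex.le_def.mp hnn).1]
  rw [Complex.lt_def]
  exact ⟨by simpa using hre', ((Complex.le_def.mp hnn).2)⟩
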